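/- Let μ be a finite Borel measure on ℝ^d. Then μ has no atoms if and only if for almost every θ ∈ S^{d−1} (with respect to the uniform measure on the sphere), the pushforward measure (P_θ)_#μ on ℝ has no atoms, where P_θ(x) = ⟨θ,x⟩. -/

import Mathlib

open MeasureTheory Metric Set Real
open scoped InnerProductSpace ENNReal NNReal

noncomputable section

/-- Points of `ℝ^d` with the Euclidean structure. -/
abbrev Pt (d : ℕ) := EuclideanSpace ℝ (Fin d)

/-- Quantile function `F_ν⁻¹(t) = inf {s | F_ν(s) ≥ t}` of a measure on `ℝ`. -/
def quantile (ν : Measure ℝ) (t : ℝ) : ℝ :=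
  sInf {s : ℝ | t ≤ (ν (Iic s)).toReal}

/-- `p`-th power of the 1D `p`-Wasserstein distance, defined via quantile functions:
`W_p^p(ν₁,ν₂) = ∫₀¹ |F_{ν₁}⁻¹(t) − F_{ν₂}⁻¹(t)|^p dt`. -/
def Wpp (p : ℝ) (ν₁ ν₂ : Measure ℝ) : ℝ :=
  ∫ t in Ioo (0:ℝ) 1, |quantile ν₁ t - quantile ν₂ t| ^ p

/-- Projection `(P_θ)_# μ` of a measure on `ℝ^d` in direction `θ`, `P_θ(x) = ⟨θ,x⟩`. -/
def proj {d : ℕ} (θ : Pt d) (μ : Measure (Pt d)) : Measure ℝ :=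
  Measure.map (fun x => ⟪θ, x⟫_ℝ) μ

/-- Uniform probability measure on the unit sphere of `ℝ^d`
(normalized `(d-1)`-dimensional Hausdorff measure on the sphere). -/
def sphereUniform (d : ℕ) : Measure (Pt d) :=
  (μH[(d:ℝ) - 1] (sphere (0 : Pt d) 1))⁻¹ • (μH[(d:ℝ) - 1]).restrict (sphere (0 : Pt d) 1)

/-- `p`-th power of the sliced Wasserstein distance
`SW_p^p(μ,ρ) = ∫_{S^{d-1}} W_p^p(μ_θ, ρ_θ) dθ`. -/
def SWpp (d : ℕ) (p : ℝ) (μ ρ : Measure (Pt d)) : ℝ :=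
  ∫ θ, Wpp p (proj θ μ) (proj θ ρ) ∂(sphereUniform d)

abbrev Euc (n : ℕ) := EuclideanSpace ℝ (Fin n)

lemma abs_sqrt_sub_sqrt {u v c : ℝ} (hu : 0 ≤ u) (hv : 0 ≤ v) (hc : 0 < c)
    (hcu : c ≤ Real.sqrt u) (hcv : c ≤ Real.sqrt v) :
    |Real.sqrt u - Real.sqrt v| * (2 * c) ≤ |u - v| := by
  calc |Real.sqrt u - Real.sqrt v| * (2 * c)
      ≤ |Real.sqrt u - Real.sqrt v| * (Real.sqrt u + Real.sqrt v) := by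
        apply mul_le_mul_of_nonneg_left (by linarith) (abs_nonneg _)
    _ = |(Real.sqrt u - Real.sqrt v) * (Real.sqrt u + Real.sqrt v)| := by
        rw [abs_mul, abs_of_nonneg (a := Real.sqrt u + Real.sqrt v) (by positivity)]
    _ = |u - v| := by
        congr 1
        linear_combination Real.mul_self_sqrt hu - Real.mul_self_sqrt hv

lemma euc_dist_sq {m : ℕ} (x y : Euc m) :
    dist x y ^ 2 = ∑ i, (x i - y i) ^ 2 := by
  rw [EuclideanSpace.dist_eq, Real.sq_sqrt (by positivity)]
  simp [Real.dist_eq, sq_abs]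

lemma euc_norm_sq {m : ℕ} (x : Euc m) :
    ‖x‖ ^ 2 = ∑ i, (x i) ^ 2 := by
  rw [EuclideanSpace.norm_eq, Real.sq_sqrt (by positivity)]
  simp [sq_abs]

lemma isAddHaar_euc (n : ℕ) :
    Measure.IsAddHaarMeasure (μH[(n:ℝ)] : Measure (Euc n)) := by
  have h : (n:ℝ) = ((Module.finrank ℝ (Euc n) : ℕ) : ℝ) := by simp
  rw [h]
  exact isAddHaarMeasure_hausdorffMeasure

lemma sphere_hausdorff_pos (n : ℕ) :
    0 < μH[(n:ℝ)] (sphere (0 : Euc (n+1)) 1) := by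
  haveI := isAddHaar_euc n
  set pr : Euc (n+1) → Euc n := fun x => WithLp.toLp 2 (fun i => x i.castSucc : Fin n → ℝ) with hprd
  have hpr : LipschitzWith 1 pr := by
    apply LipschitzWith.of_dist_le_mul
    intro x y
    simp only [NNReal.coe_one, one_mul]
    have h1 : dist (pr x) (pr y) ^ 2 ≤ dist x y ^ 2 := by
      rw [euc_dist_sq, euc_dist_sq (x := x), Fin.sum_univ_castSucc]
      exact le_add_of_nonneg_right (sq_nonneg _)
    nlinarith [dist_nonneg (x := pr x) (y := pr y), dist_nonneg (x := x) (y := y)]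
  have hsub : ball (0 : Euc n) 1 ⊆ pr '' (sphere (0 : Euc (n+1)) 1) := by
    intro y hy
    rw [mem_ball_zero_iff] at hy
    have hy2 : ‖y‖ ^ 2 ≤ 1 := by nlinarith [norm_nonneg y]
    set x : Euc (n+1) :=
      WithLp.toLp 2 (fun j => Fin.snoc (α := fun _ => ℝ) (fun i => y i) (Real.sqrt (1 - ‖y‖^2)) j : Fin (n+1) → ℝ) with hxdef
    have hxn : ‖x‖ ^ 2 = 1 := by
      rw [euc_norm_sq, Fin.sum_univ_castSucc]
      have h1 : ∀ i : Fin n, x i.castSucc = y i := fun i => by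
        simp [hxdef, Fin.snoc_castSucc]
      have h2 : x (Fin.last n) = Real.sqrt (1 - ‖y‖^2) := by
        simp [hxdef, Fin.snoc_last]
      simp only [h1, h2]
      rw [Real.sq_sqrt (by linarith), ← euc_norm_sq]
      ring
    refine ⟨x, ?_, ?_⟩
    · rw [mem_sphere_zero_iff_norm]
      nlinarith [norm_nonneg x]
    · ext i
      simp [hprd, hxdef, Fin.snoc_castSucc]
  have h1 : μH[(n:ℝ)] (ball (0:Euc n) 1) ≤ μH[(n:ℝ)] (pr '' sphere 0 1) :=
    measure_mono hsub
  have h2 := hpr.hausdorffMeasure_image_le (d := (n:ℝ)) (by positivity)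
    (sphere (0 : Euc (n+1)) 1)
  simp only [ENNReal.coe_one, ENNReal.one_rpow, one_mul] at h2
  have hpos : 0 < μH[(n:ℝ)] (ball (0:Euc n) 1) :=
    measure_ball_pos _ _ one_pos
  exact lt_of_lt_of_le hpos (h1.trans h2)

def snocMap (n : ℕ) (ε : ℝ) : Euc n → Euc (n+1) := fun y =>
  WithLp.toLp 2 (fun j => Fin.snoc (α := fun _ => ℝ) (fun i => y i) (ε * Real.sqrt (1 - ‖y‖^2)) j)

lemma snocMap_castSucc (n : ℕ) (ε : ℝ) (y : Euc n) (i : Fin n) :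
    snocMap n ε y i.castSucc = y i := by
  simp only [snocMap]
  exact Fin.snoc_castSucc (α := fun _ => ℝ) _ _ i

lemma snocMap_last (n : ℕ) (ε : ℝ) (y : Euc n) :
    snocMap n ε y (Fin.last n) = ε * Real.sqrt (1 - ‖y‖^2) := by
  simp only [snocMap]
  exact Fin.snoc_last (α := fun _ => ℝ) _ _

set_option maxHeartbeats 1000000 in
lemma lipschitz_snoc (n : ℕ) {ε : ℝ} (hε : ε ^ 2 = 1) :
    LipschitzOnWith (Real.toNNReal (Real.sqrt (n+2))) (snocMap n ε)
      {y : Euc n | ‖y‖^2 ≤ 1 - 1/(n+1)} := by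
  rw [lipschitzOnWith_iff_dist_le_mul]
  intro y₁ h₁ y₂ h₂
  simp only [mem_setOf_eq] at h₁ h₂
  set G : Euc n → Euc (n+1) := snocMap n ε with hGdef
  have hn1 : (0:ℝ) < 1/(n+1) := by positivity
  set sn := Real.sqrt (n+1) with hsnd
  have hsn : sn ^ 2 = n + 1 := Real.sq_sqrt (by positivity)
  have hsnpos : 0 < sn := Real.sqrt_pos.2 (by positivity)
  set u₁ := 1 - ‖y₁‖^2 with hu₁d
  set u₂ := 1 - ‖y₂‖^2 with hu₂d
  have hu₁ : 1/(n+1) ≤ u₁ := by rw [hu₁d]; linarith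
  have hu₂ : 1/(n+1) ≤ u₂ := by rw [hu₂d]; linarith
  have hcu₁ : sn⁻¹ ≤ Real.sqrt u₁ := by
    rw [hsnd, ← Real.sqrt_inv]
    exact Real.sqrt_le_sqrt (by rw [← one_div]; exact hu₁)
  have hcu₂ : sn⁻¹ ≤ Real.sqrt u₂ := by
    rw [hsnd, ← Real.sqrt_inv]
    exact Real.sqrt_le_sqrt (by rw [← one_div]; exact hu₂)
  have key := abs_sqrt_sub_sqrt (by linarith : (0:ℝ) ≤ u₁) (by linarith : (0:ℝ) ≤ u₂)
    (by positivity : (0:ℝ) < sn⁻¹) hcu₁ hcu₂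
  have hn₁ : ‖y₁‖ ≤ 1 := by nlinarith [norm_nonneg y₁]
  have hn₂ : ‖y₂‖ ≤ 1 := by nlinarith [norm_nonneg y₂]
  have habs : |u₁ - u₂| ≤ 2 * dist y₁ y₂ := by
    have h1 : |‖y₂‖ - ‖y₁‖| ≤ dist y₁ y₂ := by
      rw [dist_comm, dist_eq_norm]
      exact abs_norm_sub_norm_le _ _
    calc |u₁ - u₂| = |‖y₂‖ - ‖y₁‖| * (‖y₂‖ + ‖y₁‖) := by
          rw [← abs_of_nonneg (a := ‖y₂‖ + ‖y₁‖) (by positivity), ← abs_mul]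
          congr 1; rw [hu₁d, hu₂d]; ring
      _ ≤ dist y₁ y₂ * 2 := by
          apply mul_le_mul h1 (by linarith) (by positivity) dist_nonneg
      _ = 2 * dist y₁ y₂ := by ring
  -- |√u₁ - √u₂| ≤ sn * dist y₁ y₂
  have hd : |Real.sqrt u₁ - Real.sqrt u₂| ≤ sn * dist y₁ y₂ := by
    have h2 : |Real.sqrt u₁ - Real.sqrt u₂| * (2 * sn⁻¹) ≤ 2 * dist y₁ y₂ := key.trans habs
    have h3 : sn * sn⁻¹ = 1 := mul_inv_cancel₀ hsnpos.ne'
    nlinarith [abs_nonneg (Real.sqrt u₁ - Real.sqrt u₂)]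
  -- squared distance computation
  have hGsq : dist (G y₁) (G y₂) ^ 2
      = dist y₁ y₂ ^ 2 + (ε * Real.sqrt u₁ - ε * Real.sqrt u₂) ^ 2 := by
    rw [euc_dist_sq, Fin.sum_univ_castSucc]
    have hc : ∀ i : Fin n, G y₁ i.castSucc - G y₂ i.castSucc = y₁ i - y₂ i := fun i => by
      rw [hGdef, snocMap_castSucc, snocMap_castSucc]
    have hl : G y₁ (Fin.last n) - G y₂ (Fin.last n)
        = ε * Real.sqrt u₁ - ε * Real.sqrt u₂ := by
      rw [hGdef, snocMap_last, snocMap_last, hu₁d, hu₂d]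
    simp only [hc, hl, ← euc_dist_sq]
  have hsm : Real.sqrt (n+2) ^ 2 = (n:ℝ) + 2 := Real.sq_sqrt (by positivity)
  have hsmpos : (0:ℝ) ≤ Real.sqrt (n+2) := Real.sqrt_nonneg _
  have hfin : dist (G y₁) (G y₂) ≤ Real.sqrt (n+2) * dist y₁ y₂ := by
    have he : (ε * Real.sqrt u₁ - ε * Real.sqrt u₂)^2 = (Real.sqrt u₁ - Real.sqrt u₂)^2 := by
      have : (ε * Real.sqrt u₁ - ε * Real.sqrt u₂)^2
          = ε^2 * (Real.sqrt u₁ - Real.sqrt u₂)^2 := by ring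
      rw [this, hε, one_mul]
    have h4 : (Real.sqrt u₁ - Real.sqrt u₂)^2 ≤ (sn * dist y₁ y₂)^2 := by
      rw [← sq_abs (Real.sqrt u₁ - Real.sqrt u₂)]
      exact pow_le_pow_left₀ (abs_nonneg _) hd 2
    have h5 : dist (G y₁) (G y₂) ^ 2 ≤ (Real.sqrt (n+2) * dist y₁ y₂)^2 := by
      rw [hGsq, he]
      nlinarith [dist_nonneg (x := y₁) (y := y₂), sq_nonneg (dist y₁ y₂)]
    nlinarith [dist_nonneg (x := G y₁) (y := G y₂), dist_nonneg (x := y₁) (y := y₂),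
      mul_nonneg hsmpos (dist_nonneg (x := y₁) (y := y₂))]
  calc dist (G y₁) (G y₂) ≤ Real.sqrt (n+2) * dist y₁ y₂ := hfin
    _ ≤ (Real.toNNReal (Real.sqrt (n+2)) : ℝ) * dist y₁ y₂ := by
        rw [Real.coe_toNNReal _ hsmpos]

def permIso (n : ℕ) (j : Fin (n+1)) : Euc (n+1) ≃ₗᵢ[ℝ] Euc (n+1) :=
  LinearIsometryEquiv.piLpCongrLeft 2 ℝ ℝ (Equiv.swap j (Fin.last n))

lemma permIso_apply (n : ℕ) (j : Fin (n+1)) (v : Euc (n+1)) (i : Fin (n+1)) :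
    permIso n j v i = v (Equiv.swap j (Fin.last n) i) := by
  simp only [permIso, LinearIsometryEquiv.piLpCongrLeft_apply, Equiv.piCongrLeft'_apply,
    Equiv.symm_swap]

lemma permIso_invol (n : ℕ) (j : Fin (n+1)) (v : Euc (n+1)) :
    permIso n j (permIso n j v) = v := by
  ext i
  rw [permIso_apply, permIso_apply, Equiv.swap_apply_self]

set_option maxHeartbeats 1000000 in
lemma sphere_hausdorff_lt_top (n : ℕ) :
    μH[(n:ℝ)] (sphere (0 : Euc (n+1)) 1) < ⊤ := by
  haveI := isAddHaar_euc n
  set K := {y : Euc n | ‖y‖^2 ≤ 1 - 1/(n+1)} with hK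
  have hn1 : (0:ℝ) < 1/(n+1) := by positivity
  have hKfin : μH[(n:ℝ)] K < ⊤ := by
    refine lt_of_le_of_lt (measure_mono ?_) ((isCompact_closedBall (0:Euc n) 1).measure_lt_top)
    intro y hy
    simp only [hK, mem_setOf_eq] at hy
    rw [mem_closedBall_zero_iff]
    nlinarith [norm_nonneg y]
  have hcover : sphere (0 : Euc (n+1)) 1 ⊆
      ⋃ (j : Fin (n+1)), ⋃ (b : Bool),
        (permIso n j) '' (snocMap n (if b then 1 else -1) '' K) := by
    intro θ hθ
    rw [mem_sphere_zero_iff_norm] at hθ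
    have hsum : ∑ i, θ i ^ 2 = 1 := by
      rw [← euc_norm_sq, hθ]; norm_num
    have hex : ∃ j, 1/((n:ℝ)+1) ≤ θ j ^ 2 := by
      by_contra hcon
      push_neg at hcon
      have hlt : ∑ i, θ i ^ 2 < ∑ _i : Fin (n+1), 1/((n:ℝ)+1) :=
        Finset.sum_lt_sum_of_nonempty Finset.univ_nonempty (fun i _ => hcon i)
      rw [hsum, Finset.sum_const, Finset.card_univ, Fintype.card_fin, nsmul_eq_mul] at hlt
      have hone : ((n:ℝ)+1) * (1/((n:ℝ)+1)) = 1 := by field_simp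
      push_cast at hlt
      linarith
    obtain ⟨j, hj⟩ := hex
    set θ' := permIso n j θ with hθ'd
    have hθ'n : ‖θ'‖ = 1 := by rw [hθ'd, LinearIsometryEquiv.norm_map]; exact hθ
    have hlast : θ' (Fin.last n) = θ j := by
      rw [hθ'd, permIso_apply, Equiv.swap_apply_right]
    set y : Euc n := WithLp.toLp 2 (fun i => θ' i.castSucc : Fin n → ℝ) with hyd
    have hysq : ‖y‖^2 = 1 - θ j ^2 := by
      have h1 : ‖θ'‖^2 = ‖y‖^2 + θ' (Fin.last n)^2 := by
        rw [euc_norm_sq, euc_norm_sq, Fin.sum_univ_castSucc]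
      rw [hθ'n, hlast] at h1
      nlinarith
    have hymem : y ∈ K := by
      simp only [hK, mem_setOf_eq, hysq]; linarith
    set ε : ℝ := if 0 ≤ θ j then 1 else -1 with hεd
    obtain ⟨b, hb⟩ : ∃ b : Bool, ε = (if b then (1:ℝ) else -1) := by
      by_cases h : 0 ≤ θ j
      · exact ⟨true, by simp [hεd, h]⟩
      · exact ⟨false, by simp [hεd, h]⟩
    have hGy : snocMap n ε y = θ' := by
      ext i
      refine Fin.lastCases ?_ (fun i => ?_) i
      · rw [snocMap_last, hysq, hlast]
        rw [show (1 : ℝ) - (1 - θ j ^2) = θ j ^2 by ring, Real.sqrt_sq_eq_abs]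
        rw [hεd]
        by_cases h : 0 ≤ θ j
        · rw [if_pos h, one_mul, abs_of_nonneg h]
        · rw [if_neg h, abs_of_neg (lt_of_not_ge h)]; ring
      · rw [snocMap_castSucc]
    refine mem_iUnion.2 ⟨j, mem_iUnion.2 ⟨b, ?_⟩⟩
    refine ⟨snocMap n ε y, ⟨y, hymem, by rw [hb]⟩, ?_⟩
    rw [hGy, hθ'd, permIso_invol]
  refine lt_of_le_of_lt (measure_mono hcover) ?_
  refine lt_of_le_of_lt (measure_iUnion_le _) ?_
  rw [tsum_fintype]
  refine ENNReal.sum_lt_top.2 (fun j _ => ?_)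
  refine lt_of_le_of_lt (measure_iUnion_le _) ?_
  rw [tsum_fintype]
  refine ENNReal.sum_lt_top.2 (fun b _ => ?_)
  rw [(permIso n j).isometry.hausdorffMeasure_image (Or.inl (by positivity))]
  refine lt_of_le_of_lt ((lipschitz_snoc n (ε := if b then 1 else -1) (by
      by_cases h : b <;> simp [h])).hausdorffMeasure_image_le (by positivity)) ?_
  exact ENNReal.mul_lt_top (ENNReal.rpow_lt_top_of_nonneg (by positivity) ENNReal.coe_ne_top)
    hKfin

lemma hyperplane_sphere_null (n : ℕ) {v : Euc (n+1)} (hv : v ≠ 0) :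
    μH[(n:ℝ)] ({θ : Euc (n+1) | ⟪θ, v⟫_ℝ = 0} ∩ sphere 0 1) = 0 := by
  haveI : Fact (Module.finrank ℝ (Euc (n+1)) = n + 1) := ⟨finrank_euclideanSpace_fin⟩
  set V := (ℝ ∙ v)ᗮ with hVd
  have hrank : Module.finrank ℝ (↥V) = n := Submodule.finrank_orthogonal_span_singleton hv
  have himg : {θ : Euc (n+1) | ⟪θ, v⟫_ℝ = 0} ∩ sphere 0 1
      = Subtype.val '' (sphere (0 : V) 1) := by
    ext θ
    constructor
    · rintro ⟨h1, h2⟩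
      rw [mem_sphere_zero_iff_norm] at h2
      have hmem : θ ∈ V := by
        rw [hVd, Submodule.mem_orthogonal_singleton_iff_inner_left]
        exact h1
      exact ⟨⟨θ, hmem⟩, by rwa [mem_sphere_zero_iff_norm], rfl⟩
    · rintro ⟨⟨θ₀, hmem⟩, hθ₀, rfl⟩
      rw [mem_sphere_zero_iff_norm] at hθ₀
      refine ⟨?_, ?_⟩
      · rw [hVd, Submodule.mem_orthogonal_singleton_iff_inner_left] at hmem
        exact hmem
      · rwa [mem_sphere_zero_iff_norm]
  rw [himg]
  have hiso : Isometry (Subtype.val : V → Euc (n+1)) := V.subtypeₗᵢ.isometry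
  rw [hiso.hausdorffMeasure_image (Or.inl (by positivity))]
  rcases Nat.eq_zero_or_pos n with hn | hn
  · have : Subsingleton (↥V) := by
      rw [← Module.finrank_zero_iff (R := ℝ)]
      rw [hrank, hn]
    have : sphere (0 : V) 1 = ∅ := by
      ext x
      simp only [mem_sphere_zero_iff_norm, mem_empty_iff_false, iff_false]
      rw [Subsingleton.elim x 0, norm_zero]
      norm_num
    rw [this, measure_empty]
  · haveI : Nontrivial (↥V) := Module.nontrivial_of_finrank_pos (R := ℝ) (by omega)
    haveI : Measure.IsAddHaarMeasure (μH[(n:ℝ)] : Measure V) := by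
      have h : (n:ℝ) = ((Module.finrank ℝ (↥V) : ℕ) : ℝ) := by rw [hrank]
      rw [h]
      exact isAddHaarMeasure_hausdorffMeasure
    exact Measure.addHaar_sphere _ _ _


/-- A finite measure on `ℝ^d` is atomless iff almost every projection is atomless. -/
theorem statement9 (d : ℕ) (hd : 1 ≤ d) (μ : Measure (Pt d)) [IsFiniteMeasure μ] :
    (∀ x : Pt d, μ {x} = 0) ↔
      (∀ᵐ θ ∂(sphereUniform d), ∀ u : ℝ, proj θ μ {u} = 0) := by
  obtain ⟨n, rfl⟩ : ∃ n, d = n + 1 := ⟨d - 1, (Nat.succ_pred_eq_of_pos hd).symm⟩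
  have hexp : ((n+1:ℕ):ℝ) - 1 = (n:ℝ) := by push_cast; ring
  have hSU : sphereUniform (n+1) = (μH[(n:ℝ)] (sphere (0 : Pt (n+1)) 1))⁻¹ •
      (μH[(n:ℝ)]).restrict (sphere (0 : Pt (n+1)) 1) := by
    rw [sphereUniform, hexp]
  set c := μH[(n:ℝ)] (sphere (0 : Pt (n+1)) 1) with hcd
  have hc0 : 0 < c := sphere_hausdorff_pos n
  have hctop : c < ⊤ := sphere_hausdorff_lt_top n
  haveI hprob : IsProbabilityMeasure (sphereUniform (n+1)) := by
    constructor
    rw [hSU, Measure.smul_apply, Measure.restrict_apply_univ, smul_eq_mul]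
    exact ENNReal.inv_mul_cancel hc0.ne' hctop.ne
  constructor
  · -- forward
    intro hatom
    set A : Set (Pt (n+1) × (Pt (n+1) × Pt (n+1))) :=
      {q | ⟪q.1, q.2.1 - q.2.2⟫_ℝ = 0} with hAd
    have hcont : Continuous fun q : Pt (n+1) × (Pt (n+1) × Pt (n+1)) =>
        ⟪q.1, q.2.1 - q.2.2⟫_ℝ :=
      continuous_fst.inner ((continuous_fst.comp continuous_snd).sub
        (continuous_snd.comp continuous_snd))
    have hAmeas : MeasurableSet A := hcont.measurable (measurableSet_singleton 0)
    have hdiag : (μ.prod μ) {p : Pt (n+1) × Pt (n+1) | p.1 = p.2} = 0 := by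
      rw [Measure.prod_apply (isClosed_eq continuous_fst continuous_snd).measurableSet]
      have : ∀ x : Pt (n+1), (Prod.mk x ⁻¹' {p : Pt (n+1) × Pt (n+1) | p.1 = p.2}) = {x} := by
        intro x; ext y; simp [eq_comm]
      simp only [this, hatom, lintegral_zero]
    have hz : ∀ p : Pt (n+1) × Pt (n+1), p.1 ≠ p.2 →
        sphereUniform (n+1) ((fun θ => (θ, p)) ⁻¹' A) = 0 := by
      intro p hp
      have hpre : ((fun θ => (θ, p)) ⁻¹' A) = {θ : Pt (n+1) | ⟪θ, p.1 - p.2⟫_ℝ = 0} := rfl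
      have hmeas : MeasurableSet {θ : Pt (n+1) | ⟪θ, p.1 - p.2⟫_ℝ = 0} :=
        (continuous_id.inner continuous_const).measurable (measurableSet_singleton 0)
      rw [hpre, hSU, Measure.smul_apply, Measure.restrict_apply hmeas, smul_eq_mul,
        hyperplane_sphere_null n (sub_ne_zero.2 hp), mul_zero]
    have hprodA : (sphereUniform (n+1)).prod (μ.prod μ) A = 0 := by
      rw [Measure.prod_apply_symm hAmeas]
      have hae : (fun p => sphereUniform (n+1) ((fun θ => (θ, p)) ⁻¹' A)) =ᵐ[μ.prod μ] 0 := by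
        have hne : ∀ᵐ p ∂(μ.prod μ), p.1 ≠ p.2 := by
          rw [ae_iff]
          convert hdiag using 2
          ext p; simp
        exact hne.mono fun p hp => hz p hp
      rw [lintegral_congr_ae hae]
      simp
    have hθae : ∀ᵐ θ ∂(sphereUniform (n+1)), (μ.prod μ) (Prod.mk θ ⁻¹' A) = 0 := by
      have := Measure.prod_apply (μ := sphereUniform (n+1)) (ν := μ.prod μ) hAmeas
      rw [hprodA] at this
      exact (lintegral_eq_zero_iff (measurable_measure_prodMk_left hAmeas)).1 this.symm
    filter_upwards [hθae] with θ hθ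
    intro u
    have hcont2 : Continuous fun x : Pt (n+1) => ⟪θ, x⟫_ℝ :=
      continuous_const.inner continuous_id
    set F := {x : Pt (n+1) | ⟪θ, x⟫_ℝ = u} with hFd
    have hFz : μ F = 0 := by
      by_contra hne
      have hpos : 0 < μ F := pos_iff_ne_zero.2 hne
      have hsub : F ×ˢ F ⊆ Prod.mk θ ⁻¹' A := by
        rintro ⟨x, y⟩ ⟨hx, hy⟩
        show ⟪θ, x - y⟫_ℝ = 0
        rw [inner_sub_right]
        rw [hFd, mem_setOf_eq] at hx hy
        rw [hx, hy, sub_self]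
      have h0 := measure_mono_null hsub hθ
      rw [Measure.prod_prod] at h0
      exact absurd h0 (ENNReal.mul_pos hne hne).ne'
    rw [proj, Measure.map_apply hcont2.measurable (measurableSet_singleton u)]
    exact hFz
  · -- backward
    intro h x
    haveI : (ae (sphereUniform (n+1))).NeBot := ae_neBot.2 (IsProbabilityMeasure.ne_zero _)
    obtain ⟨θ, hθ⟩ := h.exists
    have hcont2 : Continuous fun y : Pt (n+1) => ⟪θ, y⟫_ℝ :=
      continuous_const.inner continuous_id
    refine le_antisymm ?_ zero_le
    calc μ {x} ≤ μ ((fun y => ⟪θ, y⟫_ℝ) ⁻¹' {⟪θ, x⟫_ℝ}) := by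
          apply measure_mono
          intro y hy
          rw [mem_singleton_iff] at hy
          simp [hy]
      _ = proj θ μ {⟪θ, x⟫_ℝ} := by
          rw [proj, Measure.map_apply hcont2.measurable (measurableSet_singleton _)]
      _ = 0 := hθ _
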